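/- Let g be a (G,ε)-color Lie algebra, U(g) its universal enveloping algebra with its canonical filtration (U(g)_n)_n, and gr(U(g)) = ⊕_n U(g)_n/U(g)_{n−1} the associated graded algebra with canonical projections π_n : U(g)_n → gr^n(U(g)). Then the bracket defined on homogeneous filtration classes by {û, v̂} := π_{n+m−1}(uv − ε(|u|,|v|)vu), for u ∈ U(g)_n, v ∈ U(g)_m with û = π_n(u), v̂ = π_m(v), is well defined and makes gr(U(g)) a (G,ε)-color Poisson algebra; moreover on gr¹(U(g)) it recovers the color Lie bracket of g. -/

import Mathlib

open scoped DirectSum TensorProduct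

/-! Common definitions: color Lie algebras over an abelian group `G` with an
antisymmetric bicharacter `ε`, their universal enveloping algebras, the canonical
filtration and associated graded objects, and formal graded deformations. -/

/-- An antisymmetric bicharacter `ε : G × G → Rˣ` (values taken in `R`). -/
def IsBicharacter {R : Type*} [CommRing R] {G : Type*} [CommGroup G]
    (ε : G → G → R) : Prop :=
  (∀ g h, ε g h * ε h g = 1) ∧
  (∀ g h k, ε g (h * k) = ε g h * ε g k) ∧
  (∀ g h k, ε (g * h) k = ε g k * ε h k)

/-- A `(G,ε)`-color Lie algebra structure on an `R`-module `L`: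
a `G`-grading (with `L` the internal direct sum of the homogeneous components),
together with a bilinear bracket which respects the grading, is `ε`-antisymmetric
and satisfies the `ε`-Jacobi identity on homogeneous elements. -/
structure ColorLie (R : Type*) [CommRing R] (G : Type*) [CommGroup G] [DecidableEq G]
    (ε : G → G → R) (L : Type*) [AddCommGroup L] [Module R L] : Type _ where
  grading : G → Submodule R L
  internal : DirectSum.IsInternal grading
  bracket : L →ₗ[R] L →ₗ[R] L
  bracket_grade : ∀ {g h : G} {a b : L}, a ∈ grading g → b ∈ grading h →
    bracket a b ∈ grading (g * h)
  bracket_antisymm : ∀ {g h : G} {a b : L}, a ∈ grading g → b ∈ grading h →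
    bracket a b = -(ε g h) • bracket b a
  bracket_jacobi : ∀ {g h k : G} {a b c : L}, a ∈ grading g → b ∈ grading h →
    c ∈ grading k →
    ε k g • bracket a (bracket b c) + ε g h • bracket b (bracket c a) +
      ε h k • bracket c (bracket a b) = 0

namespace ColorLie

variable {R : Type*} [CommRing R] {G : Type*} [CommGroup G] [DecidableEq G]
  {ε : G → G → R} {L : Type*} [AddCommGroup L] [Module R L]

/-- The relation on the tensor algebra whose induced quotient is the universal
enveloping algebra: `a ⊗ b - ε(|a|,|b|) b ⊗ a ~ [a,b]` for homogeneous `a, b`. -/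
inductive Rel (cl : ColorLie R G ε L) :
    TensorAlgebra R L → TensorAlgebra R L → Prop
  | mk {g h : G} {a b : L} (ha : a ∈ cl.grading g) (hb : b ∈ cl.grading h) :
      Rel cl (TensorAlgebra.ι R a * TensorAlgebra.ι R b
          - ε g h • (TensorAlgebra.ι R b * TensorAlgebra.ι R a))
        (TensorAlgebra.ι R (cl.bracket a b))

/-- The universal enveloping algebra `U(L) = T(L)/J(L)` of a color Lie algebra. -/
abbrev U (cl : ColorLie R G ε L) : Type _ := RingQuot cl.Rel

noncomputable instance U.instRingU (cl : ColorLie R G ε L) : Ring cl.U := RingQuot.instRing cl.Rel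

/-- The canonical map `i : L → U(L)`. -/
noncomputable def ιU (cl : ColorLie R G ε L) : L →ₗ[R] cl.U :=
  (RingQuot.mkAlgHom R cl.Rel).toLinearMap ∘ₗ TensorAlgebra.ι R

/-- The relation on the tensor algebra defining the color symmetric algebra:
`a ⊗ b ~ ε(|a|,|b|) b ⊗ a` for homogeneous `a, b`. -/
inductive SymRel (cl : ColorLie R G ε L) :
    TensorAlgebra R L → TensorAlgebra R L → Prop
  | mk {g h : G} {a b : L} (ha : a ∈ cl.grading g) (hb : b ∈ cl.grading h) :
      SymRel cl (TensorAlgebra.ι R a * TensorAlgebra.ι R b)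
        (ε g h • (TensorAlgebra.ι R b * TensorAlgebra.ι R a))

/-- The color symmetric algebra `S(L) = T(L)/I(L)`. -/
abbrev SymAlg (cl : ColorLie R G ε L) : Type _ := RingQuot cl.SymRel

/-- The canonical map `L → S(L)`. -/
noncomputable def ιS (cl : ColorLie R G ε L) : L →ₗ[R] cl.SymAlg :=
  (RingQuot.mkAlgHom R cl.SymRel).toLinearMap ∘ₗ TensorAlgebra.ι R

/-- The degree-`g` component of the `G`-grading of `U(L)`: the span of the
monomials `i(a₁) ⋯ i(aₖ)` with `aⱼ` homogeneous and the product of the degrees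
equal to `g`. -/
noncomputable def Udeg (cl : ColorLie R G ε L) (g : G) : Submodule R cl.U :=
  Submodule.span R { x : cl.U | ∃ l : List (G × L),
    (∀ p ∈ l, p.2 ∈ cl.grading p.1) ∧ (l.map Prod.fst).prod = g ∧
    x = (l.map fun p => cl.ιU p.2).prod }

/-- The `n`-th piece `U^n(L)` of the canonical filtration of `U(L)`: the span of
products of at most `n` elements of (the image of) `L`. -/
noncomputable def Ufilt (cl : ColorLie R G ε L) (n : ℕ) : Submodule R cl.U :=
  Submodule.span R { x : cl.U | ∃ l : List L, l.length ≤ n ∧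
    x = (l.map fun a => cl.ιU a).prod }

/-- `U^{n-1}(L)`, with the convention `U^{-1}(L) = 0`. -/
noncomputable def UfiltPred (cl : ColorLie R G ε L) : ℕ → Submodule R cl.U
  | 0 => ⊥
  | n + 1 => cl.Ufilt n

/-- `U^{n-1}(L)` viewed as a submodule of `U^n(L)`. -/
noncomputable def grSub (cl : ColorLie R G ε L) (n : ℕ) : Submodule R (cl.Ufilt n) :=
  Submodule.comap (cl.Ufilt n).subtype (cl.UfiltPred n)

/-- The `n`-th piece `gr^n(U(L)) = U^n(L)/U^{n-1}(L)` of the associated graded algebra. -/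
abbrev grU (cl : ColorLie R G ε L) (n : ℕ) : Type _ := cl.Ufilt n ⧸ cl.grSub n

/-- The canonical projection `π_n : U^n(L) → gr^n(U(L))`. -/
noncomputable def πgr (cl : ColorLie R G ε L) (n : ℕ) : cl.Ufilt n →ₗ[R] cl.grU n :=
  (cl.grSub n).mkQ

/-- The degree-`g` component (for `g ∈ G`) of `gr^n(U(L))`. -/
noncomputable def grUdeg (cl : ColorLie R G ε L) (n : ℕ) (g : G) :
    Submodule R (cl.grU n) :=
  Submodule.map (cl.grSub n).mkQ
    (Submodule.comap (cl.Ufilt n).subtype (cl.Udeg g))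

/-- The `(ℕ,G)`-bigraded piece of the color symmetric algebra: span of products of
exactly `n` generators (for the ℕ-grading). -/
noncomputable def SdegZ (cl : ColorLie R G ε L) (n : ℕ) : Submodule R cl.SymAlg :=
  Submodule.span R { x : cl.SymAlg | ∃ l : List L, l.length = n ∧
    x = (l.map fun a => cl.ιS a).prod }

/-- The degree-`g` component of the `G`-grading of `S(L)`. -/
noncomputable def SdegG (cl : ColorLie R G ε L) (g : G) : Submodule R cl.SymAlg :=
  Submodule.span R { x : cl.SymAlg | ∃ l : List (G × L),
    (∀ p ∈ l, p.2 ∈ cl.grading p.1) ∧ (l.map Prod.fst).prod = g ∧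
    x = (l.map fun p => cl.ιS p.2).prod }

/-- A graded deformation `μ_t = Σ tⁿ μ_n` of a color Lie algebra `(L, μ₀)`:
every coefficient `μ_n` is a bilinear map of degree `e`, the family is
`ε`-antisymmetric and satisfies the `ε`-Jacobi identity order by order in `t`,
and `μ 0` is the original bracket. -/
structure Deformation (cl : ColorLie R G ε L) : Type _ where
  μ : ℕ → L →ₗ[R] L →ₗ[R] L
  init : μ 0 = cl.bracket
  graded : ∀ (n : ℕ) {g h : G} {a b : L}, a ∈ cl.grading g → b ∈ cl.grading h →
    μ n a b ∈ cl.grading (g * h)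
  antisymm : ∀ (n : ℕ) {g h : G} {a b : L}, a ∈ cl.grading g → b ∈ cl.grading h →
    μ n a b = -(ε g h) • μ n b a
  jacobi : ∀ (r : ℕ) {g h k : G} {a b c : L}, a ∈ cl.grading g →
    b ∈ cl.grading h → c ∈ cl.grading k →
    ∑ s ∈ Finset.range (r + 1),
      (ε k g • μ s a (μ (r - s) b c) + ε g h • μ s b (μ (r - s) c a) +
        ε h k • μ s c (μ (r - s) a b)) = 0

/-- A graded deformation is trivial iff it is equivalent to the undeformed bracket
via a graded formal automorphism `f = id + t f₁ + t² f₂ + ⋯` with each `f_n` of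
degree `e`. -/
def Deformation.IsTrivial {cl : ColorLie R G ε L} (D : cl.Deformation) : Prop :=
  ∃ f : ℕ → L →ₗ[R] L, f 0 = LinearMap.id ∧
    (∀ (n : ℕ) {g : G} {a : L}, a ∈ cl.grading g → f n a ∈ cl.grading g) ∧
    ∀ (r : ℕ) (a b : L),
      ∑ s ∈ Finset.range (r + 1), f s (D.μ (r - s) a b) =
      ∑ q ∈ Finset.range (r + 1), cl.bracket (f q a) (f (r - q) b)

/-- `ψ` is a graded Chevalley–Eilenberg 2-cocycle of degree `e` of `L` with values
in the adjoint module `L`. -/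
def IsCocycle2Adj (cl : ColorLie R G ε L) (ψ : L →ₗ[R] L →ₗ[R] L) : Prop :=
  (∀ {g h : G} {a b : L}, a ∈ cl.grading g → b ∈ cl.grading h →
    ψ a b ∈ cl.grading (g * h)) ∧
  (∀ {g h : G} {a b : L}, a ∈ cl.grading g → b ∈ cl.grading h →
    ψ a b = -(ε g h) • ψ b a) ∧
  (∀ {g h k : G} {x y z : L}, x ∈ cl.grading g → y ∈ cl.grading h →
    z ∈ cl.grading k →
    cl.bracket x (ψ y z) - ε g h • cl.bracket y (ψ x z)
      + (ε g k * ε h k) • cl.bracket z (ψ x y)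
      - ε g h • ψ (cl.bracket x y) z + (ε g k * ε h k) • ψ (cl.bracket x z) y
      - (ε g h * ε g k * ε h k) • ψ (cl.bracket y z) x = 0)

/-- `ψ` is a graded Chevalley–Eilenberg 2-coboundary of degree `e` with values in
the adjoint module: `ψ = δ_CE f` for some degree-`e` 1-cochain `f`. -/
def IsCoboundary2Adj (cl : ColorLie R G ε L) (ψ : L →ₗ[R] L →ₗ[R] L) : Prop :=
  ∃ f : L →ₗ[R] L, (∀ {g : G} {a : L}, a ∈ cl.grading g → f a ∈ cl.grading g) ∧
    ∀ {g h : G} {x y : L}, x ∈ cl.grading g → y ∈ cl.grading h →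
      ψ x y = cl.bracket x (f y) - ε g h • cl.bracket y (f x) - f (cl.bracket x y)

/-- `ω` is a graded Chevalley–Eilenberg 2-cocycle of degree `e` of `L` with values
in the trivial module `R` (concentrated in degree `e`). -/
def IsCocycleTriv (cl : ColorLie R G ε L) (ω : L →ₗ[R] L →ₗ[R] R) : Prop :=
  (∀ {g h : G} {a b : L}, a ∈ cl.grading g → b ∈ cl.grading h → g * h ≠ 1 →
    ω a b = 0) ∧
  (∀ {g h : G} {a b : L}, a ∈ cl.grading g → b ∈ cl.grading h →
    ω a b = -(ε g h) * ω b a) ∧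
  (∀ {g h k : G} {x y z : L}, x ∈ cl.grading g → y ∈ cl.grading h →
    z ∈ cl.grading k →
    -(ε g h) * ω (cl.bracket x y) z + (ε g k * ε h k) * ω (cl.bracket x z) y
      - (ε g h * ε g k * ε h k) * ω (cl.bracket y z) x = 0)

/-- `ω` is a graded 2-coboundary of degree `e` with values in the trivial module `R`. -/
def IsCoboundaryTriv (cl : ColorLie R G ε L) (ω : L →ₗ[R] L →ₗ[R] R) : Prop :=
  ∃ f : L →ₗ[R] R, (∀ {g : G} {a : L}, a ∈ cl.grading g → g ≠ 1 → f a = 0) ∧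
    ∀ {g h : G} {x y : L}, x ∈ cl.grading g → y ∈ cl.grading h →
      ω x y = -(f (cl.bracket x y))

end ColorLie

/-- A graded associative (formal) deformation `π_t = Σ tⁿ π_n` of a `G`-graded
associative algebra `A` (with grading `𝒜`): `π₀` is the original multiplication,
every coefficient `π_n` is of degree `e`, and `π_t` is associative order by
order in `t`. -/
structure AssocDeformation (R : Type*) (G : Type*) [CommRing R] [CommGroup G]
    (A : Type*) [Ring A] [Algebra R A] (𝒜 : G → Submodule R A) : Type _ where
  π : ℕ → A →ₗ[R] A →ₗ[R] A
  init : ∀ a b : A, π 0 a b = a * b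
  graded : ∀ (n : ℕ) {g h : G} {a b : A}, a ∈ 𝒜 g → b ∈ 𝒜 h → π n a b ∈ 𝒜 (g * h)
  assoc : ∀ (r : ℕ) (a b c : A),
    ∑ s ∈ Finset.range (r + 1), π s (π (r - s) a b) c =
    ∑ s ∈ Finset.range (r + 1), π s a (π (r - s) b c)

/-- A graded associative deformation is trivial iff it is conjugate to the
undeformed multiplication by a graded formal isomorphism
`φ_t = id + t φ₁ + t² φ₂ + ⋯` with each `φ_r` of degree `e`. -/
def AssocDeformation.IsTrivial {R G A : Type*} [CommRing R] [CommGroup G]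
    [Ring A] [Algebra R A] {𝒜 : G → Submodule R A}
    (D : AssocDeformation R G A 𝒜) : Prop :=
  ∃ f : ℕ → A →ₗ[R] A, f 0 = LinearMap.id ∧
    (∀ (n : ℕ) {g : G} {a : A}, a ∈ 𝒜 g → f n a ∈ 𝒜 g) ∧
    ∀ (r : ℕ) (a b : A),
      ∑ s ∈ Finset.range (r + 1), f s (D.π (r - s) a b) =
      ∑ q ∈ Finset.range (r + 1), f q a * f (r - q) b
/-- The space of linear maps `M → M` homogeneous of degree `α` with respect to a
`G`-grading `ℳ` of `M`. -/
def HomDeg {R : Type*} [CommRing R] {G : Type*} [CommGroup G]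
    {M : Type*} [AddCommGroup M] [Module R M]
    (ℳ : G → Submodule R M) (α : G) : Submodule R (M →ₗ[R] M) where
  carrier := { f | ∀ (β : G), ∀ x ∈ ℳ β, f x ∈ ℳ (α * β) }
  add_mem' := by
    intro f g hf hg β x hx
    simpa using add_mem (hf β x hx) (hg β x hx)
  zero_mem' := by
    intro β x hx
    simp
  smul_mem' := by
    intro c f hf β x hx
    simpa using Submodule.smul_mem _ c (hf β x hx)

/-- The graded Chevalley–Eilenberg coboundary operator, on cochains recorded
together with the degrees of their (homogeneous) arguments.  For a cochain `f`
of degree `γ`, arguments `x` with degrees `α`,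
`δf(x₁,…,x_{n+2}) = Σᵢ (-1)^{i+1} ε(γ,αᵢ) εᵢ xᵢ · f(…,x̂ᵢ,…)
  + Σ_{i<j} (-1)^{i+j} ε(γ,αᵢ) ε(γ,αⱼ) εᵢ εⱼ f([xᵢ,xⱼ],…,x̂ᵢ,…,x̂ⱼ,…)`
with `εᵢ = Π_{h<i} ε(α_h,αᵢ)` (indices are 1-based in the informal formula). -/
def ceD {R : Type*} [CommRing R] {G : Type*} [CommGroup G]
    {L : Type*} [AddCommGroup L] [Module R L]
    {N : Type*} [AddCommGroup N] [Module R N]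
    (ε : G → G → R) (bracket : L →ₗ[R] L →ₗ[R] L) (ρ : L →ₗ[R] N →ₗ[R] N)
    (γ : G) {n : ℕ}
    (f : (Fin (n + 1) → G) → (Fin (n + 1) → L) → N)
    (α : Fin (n + 2) → G) (x : Fin (n + 2) → L) : N :=
  (∑ i : Fin (n + 2),
    ((-1 : ℤ) ^ (i : ℕ)) •
      ((ε γ (α i) * ∏ h ∈ Finset.univ.filter (fun h : Fin (n + 2) => h < i),
          ε (α h) (α i)) •
        ρ (x i) (f (Fin.removeNth i α) (Fin.removeNth i x))))
  + ∑ i : Fin (n + 2), ∑ j : Fin (n + 2),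
      if hij : i < j then
        ((-1 : ℤ) ^ ((i : ℕ) + (j : ℕ))) •
          ((ε γ (α i) * ε γ (α j) *
            (∏ h ∈ Finset.univ.filter (fun h : Fin (n + 2) => h < i), ε (α h) (α i)) *
            (∏ h ∈ Finset.univ.filter (fun h : Fin (n + 2) => h < j), ε (α h) (α j))) •
            f (Fin.cons (α i * α j)
                (Fin.removeNth ⟨i.1, by
                  have h1 := j.isLt
                  have h2 : (i : ℕ) < (j : ℕ) := hij
                  omega⟩ (Fin.removeNth j α)))
              (Fin.cons (bracket (x i) (x j))
                (Fin.removeNth ⟨i.1, by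
                  have h1 := j.isLt
                  have h2 : (i : ℕ) < (j : ℕ) := hij
                  omega⟩ (Fin.removeNth j x))))
      else 0

namespace ColorLie

variable {R : Type*} [CommRing R] {G : Type*} [CommGroup G] [DecidableEq G]
  {ε : G → G → R} {L : Type*} [AddCommGroup L] [Module R L]

/-- The `n`-th coefficient of the star product induced on the associated graded
algebra by a symmetrization isomorphism `ω`:
for `u ∈ gr^p(U(L))`, `v ∈ gr^q(U(L))`,
`m_n(u,v) = ω⁻¹((ω(u) ∘ ω(v))_{p+q-n}) ∈ gr^{p+q-n}(U(L))`. -/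
noncomputable def starCoef (cl : ColorLie R G ε L)
    (ω : (⨁ n : ℕ, cl.grU n) ≃ₗ[R] cl.U) (n p q : ℕ)
    (u : cl.grU p) (v : cl.grU q) : cl.grU (p + q - n) :=
  DirectSum.component R ℕ (fun m => cl.grU m) (p + q - n)
    (ω.symm (ω (DirectSum.lof R ℕ (fun m => cl.grU m) p u) *
      ω (DirectSum.lof R ℕ (fun m => cl.grU m) q v)))

end ColorLie

/-- Extraction of the `n`-th power series coefficient of an element of
`R[[t]] ⊗ M`, i.e. of "`M[[t]]`" for `M` finite dimensional. -/
noncomputable def coeffPS (K : Type*) [CommRing K] (M : Type*) [AddCommGroup M]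
    [Module K M] (n : ℕ) : (PowerSeries K ⊗[K] M) →ₗ[K] M :=
  (TensorProduct.lid K M).toLinearMap ∘ₗ LinearMap.rTensor M (PowerSeries.coeff (R := K) n)

/-- The relation whose `RingQuot` is the quotient of `A` by the two-sided ideal
generated by `1 - c`. -/
def unitRel {A : Type*} [Ring A] (c : A) : A → A → Prop := fun x y => x = 1 ∧ y = c

/-- The Poincaré–Birkhoff–Witt admissibility condition on an ordered monomial:
indices weakly increase, with strict increase required at an index `i` whenever
`ε(|x_i|,|x_i|) ≠ 1`. -/
def PBWAdmissible {R : Type*} [CommRing R] {G : Type*} [CommGroup G]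
    {I : Type*} [LinearOrder I] (ε : G → G → R) (deg : I → G) (l : List I) : Prop :=
  l.Chain' fun i j => i < j ∨ (i = j ∧ ε (deg i) (deg i) = 1)
set_option linter.unusedSectionVars false
namespace ColorLie

section Aux

variable {K : Type*} [Field K] {G : Type*} [CommGroup G] [DecidableEq G]
  {L : Type*} [AddCommGroup L] [Module K L]
  {ε : G → G → K} (cl : ColorLie K G ε L)

lemma bichar_ne_zero (hε : IsBicharacter ε) (g h : G) : ε g h ≠ 0 :=
  left_ne_zero_of_mul_eq_one (hε.1 g h)

lemma bichar_one_left (hε : IsBicharacter ε) (g : G) : ε 1 g = 1 := by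
  have h1 : ε 1 g * ε 1 g = ε 1 g * 1 := by
    rw [← hε.2.2 1 1 g, one_mul, mul_one]
  exact mul_left_cancel₀ (bichar_ne_zero hε 1 g) h1

lemma bichar_one_right (hε : IsBicharacter ε) (g : G) : ε g 1 = 1 := by
  have h1 : ε g 1 * ε g 1 = ε g 1 * 1 := by
    rw [← hε.2.1 g 1 1, one_mul, mul_one]
  exact mul_left_cancel₀ (bichar_ne_zero hε g 1) h1

/-! ### Filtration basics -/

lemma mem_Ufilt_of_list (l : List L) {n : ℕ} (h : l.length ≤ n) :
    (l.map fun a => cl.ιU a).prod ∈ cl.Ufilt n :=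
  Submodule.subset_span ⟨l, h, rfl⟩

lemma one_mem_Ufilt (n : ℕ) : (1 : cl.U) ∈ cl.Ufilt n := by
  simpa using cl.mem_Ufilt_of_list [] (Nat.zero_le n)

lemma ιU_mem_Ufilt (a : L) : cl.ιU a ∈ cl.Ufilt 1 := by
  simpa using cl.mem_Ufilt_of_list [a] le_rfl

lemma gm_mem_Ufilt (l : List (G × L)) {n : ℕ} (h : l.length ≤ n) :
    (l.map fun p => cl.ιU p.2).prod ∈ cl.Ufilt n := by
  simpa [List.map_map, Function.comp_def] using cl.mem_Ufilt_of_list (l.map Prod.snd) (by simpa using h)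

lemma Ufilt_mono {n m : ℕ} (h : n ≤ m) : cl.Ufilt n ≤ cl.Ufilt m :=
  Submodule.span_mono fun x hx => by
    obtain ⟨l, hl, hx⟩ := hx; exact ⟨l, hl.trans h, hx⟩

lemma Ufilt_mul {n m : ℕ} {u v : cl.U} (hu : u ∈ cl.Ufilt n) (hv : v ∈ cl.Ufilt m) :
    u * v ∈ cl.Ufilt (n + m) := by
  have hle : cl.Ufilt n * cl.Ufilt m ≤ cl.Ufilt (n + m) := by
    rw [Ufilt, Ufilt, Submodule.span_mul_span]
    apply Submodule.span_le.2
    rintro x ⟨y, ⟨ly, hly, rfl⟩, z, ⟨lz, hlz, rfl⟩, rfl⟩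
    refine Submodule.subset_span ⟨ly ++ lz, by simp; omega, by simp⟩
  exact hle (Submodule.mul_mem_mul hu hv)

lemma Ufilt_le_UfiltPred {n m : ℕ} (h : n + 1 ≤ m) : cl.Ufilt n ≤ cl.UfiltPred m := by
  match m, h with
  | m + 1, h => exact cl.Ufilt_mono (by omega)

lemma UfiltPred_le_Ufilt {m n : ℕ} (h : m ≤ n + 1) : cl.UfiltPred m ≤ cl.Ufilt n := by
  match m with
  | 0 => exact bot_le
  | m + 1 => exact cl.Ufilt_mono (by omega)

lemma UfiltPred_mono {n m : ℕ} (h : n ≤ m) : cl.UfiltPred n ≤ cl.UfiltPred m := by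
  match n, m with
  | 0, m => exact bot_le
  | n + 1, m + 1 => exact cl.Ufilt_mono (by omega)

/-! ### The defining relation in `U` -/

lemma ιU_comm {g h : G} {a b : L} (ha : a ∈ cl.grading g) (hb : b ∈ cl.grading h) :
    cl.ιU a * cl.ιU b - ε g h • (cl.ιU b * cl.ιU a) = cl.ιU (cl.bracket a b) := by
  have := RingQuot.mkAlgHom_rel K (Rel.mk ha hb)
  simpa [ιU, map_sub, map_mul, map_smul] using this

/-! ### Homogeneous decomposition -/

lemma mem_span_homog (a : L) :
    a ∈ Submodule.span K {x : L | ∃ g, x ∈ cl.grading g} := by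
  have htop := cl.internal.submodule_iSup_eq_top
  have hle : (⊤ : Submodule K L) ≤ Submodule.span K {x : L | ∃ g, x ∈ cl.grading g} := by
    rw [← htop]
    exact iSup_le fun g x hx => Submodule.subset_span ⟨g, hx⟩
  exact hle trivial

/-- Graded monomials of degree `g` and length at most `n`. -/
def GMon (n : ℕ) (g : G) : Set cl.U :=
  { x | ∃ l : List (G × L), (∀ p ∈ l, p.2 ∈ cl.grading p.1) ∧ (l.map Prod.fst).prod = g ∧
      l.length ≤ n ∧ x = (l.map fun p => cl.ιU p.2).prod }

/-- Graded monomials of any degree, of length at most `n`. -/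
def GMonAll (n : ℕ) : Set cl.U :=
  { x | ∃ l : List (G × L), (∀ p ∈ l, p.2 ∈ cl.grading p.1) ∧
      l.length ≤ n ∧ x = (l.map fun p => cl.ιU p.2).prod }

lemma prod_mem_span_GMonAll (l : List L) :
    (l.map fun a => cl.ιU a).prod ∈ Submodule.span K (cl.GMonAll l.length) := by
  induction l with
  | nil => exact Submodule.subset_span ⟨[], by simp, by simp, by simp⟩
  | cons a t ih =>
    simp only [List.map_cons, List.prod_cons]
    have step : ∀ x, x ∈ Submodule.span K (cl.GMonAll t.length) →
        cl.ιU a * x ∈ Submodule.span K (cl.GMonAll (a :: t).length) := by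
      intro x hx
      refine Submodule.span_induction
        (p := fun x _ => cl.ιU a * x ∈ Submodule.span K (cl.GMonAll (a :: t).length))
        ?_ ?_ ?_ ?_ hx
      · rintro y ⟨ly, hly, hlen, rfl⟩
        have ha := cl.mem_span_homog a
        refine Submodule.span_induction
          (p := fun z _ => cl.ιU z * (ly.map fun p => cl.ιU p.2).prod ∈
            Submodule.span K (cl.GMonAll (a :: t).length)) ?_ ?_ ?_ ?_ ha
        · rintro z ⟨g, hz⟩
          refine Submodule.subset_span ⟨(g, z) :: ly, ?_, by simp; omega, by simp⟩
          intro p hp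
          rcases List.mem_cons.1 hp with h | h
          · subst h; exact hz
          · exact hly p h
        · simp
        · intro y z _ _ hy hz
          rw [map_add, add_mul]; exact add_mem hy hz
        · intro c y _ hy
          rw [map_smul, smul_mul_assoc]; exact Submodule.smul_mem _ _ hy
      · simp
      · intro y z _ _ hy hz; rw [mul_add]; exact add_mem hy hz
      · intro c y _ hy; rw [mul_smul_comm]; exact Submodule.smul_mem _ _ hy
    exact step _ ih

lemma GMonAll_mono {n m : ℕ} (h : n ≤ m) : cl.GMonAll n ⊆ cl.GMonAll m := by
  rintro x ⟨l, h1, h2, rfl⟩; exact ⟨l, h1, h2.trans h, rfl⟩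

lemma Ufilt_le_span_GMonAll (n : ℕ) :
    cl.Ufilt n ≤ Submodule.span K (cl.GMonAll n) := by
  apply Submodule.span_le.2
  rintro x ⟨l, hl, rfl⟩
  exact Submodule.span_mono (cl.GMonAll_mono hl) (cl.prod_mem_span_GMonAll l)

/-! ### Coaction of `K[G]` and homogeneous projections -/

/-- The linear map `L → K[G] ⊗ U`, `a_g ↦ g ⊗ i(a_g)`. -/
noncomputable def dMap : L →ₗ[K] (MonoidAlgebra K G ⊗[K] cl.U) :=
  (DirectSum.toModule K G _ fun g =>
      (TensorProduct.mk K (MonoidAlgebra K G) cl.U (MonoidAlgebra.single g 1)) ∘ₗ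
        (cl.ιU ∘ₗ (cl.grading g).subtype)) ∘ₗ
    (LinearEquiv.ofBijective (DirectSum.coeLinearMap cl.grading) cl.internal).symm.toLinearMap

lemma dMap_apply {g : G} {a : L} (ha : a ∈ cl.grading g) :
    cl.dMap a = MonoidAlgebra.single g (1 : K) ⊗ₜ[K] cl.ιU a := by
  have h1 : (LinearEquiv.ofBijective (DirectSum.coeLinearMap cl.grading) cl.internal).symm a =
      DirectSum.lof K G (fun g => cl.grading g) g ⟨a, ha⟩ := by
    rw [LinearEquiv.symm_apply_eq, DirectSum.lof_eq_of]
    show a = DirectSum.coeLinearMap cl.grading (DirectSum.of (fun g => cl.grading g) g ⟨a, ha⟩)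
    rw [DirectSum.coeLinearMap_of]
  simp only [dMap, LinearMap.comp_apply, LinearEquiv.coe_toLinearMap, h1,
    DirectSum.toModule_lof]
  rfl

lemma coact_rel : ∀ ⦃x y : TensorAlgebra K L⦄, cl.Rel x y →
    TensorAlgebra.lift K cl.dMap x = TensorAlgebra.lift K cl.dMap y := by
  intro x y r
  cases r with
  | @mk g h a b ha hb =>
    rw [map_sub, map_smul, map_mul, map_mul, TensorAlgebra.lift_ι_apply,
      TensorAlgebra.lift_ι_apply, TensorAlgebra.lift_ι_apply,
      cl.dMap_apply ha, cl.dMap_apply hb, cl.dMap_apply (cl.bracket_grade ha hb),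
      Algebra.TensorProduct.tmul_mul_tmul, Algebra.TensorProduct.tmul_mul_tmul,
      MonoidAlgebra.single_mul_single, MonoidAlgebra.single_mul_single,
      mul_one, mul_comm h g, ← TensorProduct.tmul_smul, ← TensorProduct.tmul_sub,
      cl.ιU_comm ha hb]

/-- The coaction `U → K[G] ⊗ U`. -/
noncomputable def coact : cl.U →ₐ[K] (MonoidAlgebra K G ⊗[K] cl.U) :=
  RingQuot.liftAlgHom K ⟨TensorAlgebra.lift K cl.dMap, cl.coact_rel⟩

lemma coact_ιU (a : L) : cl.coact (cl.ιU a) = cl.dMap a := by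
  have := RingQuot.liftAlgHom_mkAlgHom_apply K (TensorAlgebra.lift K cl.dMap)
    cl.coact_rel (TensorAlgebra.ι K a)
  simpa [ιU, coact, TensorAlgebra.lift_ι_apply] using this

lemma coact_prod (l : List (G × L)) (hl : ∀ p ∈ l, p.2 ∈ cl.grading p.1) :
    cl.coact ((l.map fun p => cl.ιU p.2).prod) =
      MonoidAlgebra.single ((l.map Prod.fst).prod) (1 : K) ⊗ₜ[K]
        (l.map fun p => cl.ιU p.2).prod := by
  induction l with
  | nil =>
    simp [Algebra.TensorProduct.one_def, MonoidAlgebra.one_def]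
  | cons p t ih =>
    simp only [List.map_cons, List.prod_cons, map_mul, cl.coact_ιU,
      cl.dMap_apply (hl p (by simp)), ih (fun q hq => hl q (by simp [hq])),
      Algebra.TensorProduct.tmul_mul_tmul, MonoidAlgebra.single_mul_single, mul_one]

/-- Evaluation at `g` as a linear map on `K[G]`. -/
noncomputable def evAt (g : G) : MonoidAlgebra K G →ₗ[K] K where
  toFun f := f.coeff g
  map_add' x y := Finsupp.add_apply x.coeff y.coeff g
  map_smul' c x := Finsupp.smul_apply c x.coeff g

/-- The projection of `U` onto its degree-`g` part. -/
noncomputable def projG (g : G) : cl.U →ₗ[K] cl.U :=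
  (TensorProduct.lid K cl.U).toLinearMap ∘ₗ
    (LinearMap.rTensor cl.U (evAt (K := K) g)) ∘ₗ cl.coact.toLinearMap

lemma projG_prod (g : G) (l : List (G × L)) (hl : ∀ p ∈ l, p.2 ∈ cl.grading p.1) :
    cl.projG g ((l.map fun p => cl.ιU p.2).prod) =
      if (l.map Prod.fst).prod = g then (l.map fun p => cl.ιU p.2).prod else 0 := by
  simp only [projG, LinearMap.comp_apply, AlgHom.toLinearMap_apply, cl.coact_prod l hl,
    LinearMap.rTensor_tmul, LinearEquiv.coe_toLinearMap, TensorProduct.lid_tmul]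
  have : evAt (K := K) g (MonoidAlgebra.single ((l.map Prod.fst).prod) (1 : K)) =
      if (l.map Prod.fst).prod = g then 1 else 0 := by
    show (MonoidAlgebra.single ((l.map Prod.fst).prod) (1 : K)).coeff g = _
    simp [MonoidAlgebra.coeff_single, Finsupp.single_apply]
  rw [this]
  split <;> simp

lemma projG_Udeg {g : G} {u : cl.U} (hu : u ∈ cl.Udeg g) : cl.projG g u = u := by
  refine Submodule.span_induction ?_ ?_ ?_ ?_ hu
  · rintro x ⟨l, h1, h2, rfl⟩
    rw [cl.projG_prod g l h1, if_pos h2]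
  · exact map_zero _
  · intro x y _ _ hx hy; rw [map_add, hx, hy]
  · intro c x _ hx; rw [map_smul, hx]

lemma projG_Ufilt {g : G} {n : ℕ} {u : cl.U} (hu : u ∈ cl.Ufilt n) :
    cl.projG g u ∈ Submodule.span K (cl.GMon n g) := by
  have hu' := cl.Ufilt_le_span_GMonAll n hu
  refine Submodule.span_induction ?_ ?_ ?_ ?_ hu'
  · rintro x ⟨l, h1, h2, rfl⟩
    rw [cl.projG_prod g l h1]
    split
    · exact Submodule.subset_span ⟨l, h1, ‹_›, h2, rfl⟩
    · exact zero_mem _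
  · simp
  · intro x y _ _ hx hy; rw [map_add]; exact add_mem hx hy
  · intro c x _ hx; rw [map_smul]; exact Submodule.smul_mem _ _ hx

lemma mem_span_GMon {n : ℕ} {g : G} {u : cl.U} (h1 : u ∈ cl.Ufilt n)
    (h2 : u ∈ cl.Udeg g) : u ∈ Submodule.span K (cl.GMon n g) := by
  rw [← cl.projG_Udeg h2]; exact cl.projG_Ufilt h1

/-! ### Commutators drop filtration degree -/

lemma ιU_comm' {g h : G} {a b : L} (ha : a ∈ cl.grading g) (hb : b ∈ cl.grading h) :
    cl.ιU a * cl.ιU b = ε g h • (cl.ιU b * cl.ιU a) + cl.ιU (cl.bracket a b) := by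
  rw [← cl.ιU_comm ha hb]; abel

lemma comm_single (hε : IsBicharacter ε) {g : G} {a : L} (ha : a ∈ cl.grading g)
    (l : List (G × L)) (hl : ∀ p ∈ l, p.2 ∈ cl.grading p.1) :
    cl.ιU a * (l.map fun p => cl.ιU p.2).prod -
      ε g ((l.map Prod.fst).prod) • ((l.map fun p => cl.ιU p.2).prod * cl.ιU a) ∈
      cl.Ufilt l.length := by
  induction l with
  | nil => simp [bichar_one_right hε g]
  | cons p t ih =>
    obtain ⟨h, b⟩ := p
    have hb : b ∈ cl.grading h := hl (h, b) (by simp)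
    have ihm := ih (fun q hq => hl q (by simp [hq]))
    set P := (t.map fun p => cl.ιU p.2).prod with hP
    set gt := (t.map Prod.fst).prod with hgt
    simp only [List.map_cons, List.prod_cons, List.length_cons]
    have expand : cl.ιU a * (cl.ιU b * P) - ε g (h * gt) • (cl.ιU b * P * cl.ιU a)
        = ε g h • (cl.ιU b * (cl.ιU a * P - ε g gt • (P * cl.ιU a)))
          + cl.ιU (cl.bracket a b) * P := by
      rw [hε.2.1, ← mul_assoc, cl.ιU_comm' ha hb]
      simp only [add_mul, smul_mul_assoc, mul_sub, mul_smul_comm, smul_sub, smul_smul,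
        mul_assoc]
      abel
    rw [expand]
    refine add_mem (Submodule.smul_mem _ _ ?_) ?_
    · have := cl.Ufilt_mul (cl.ιU_mem_Ufilt b) ihm
      exact cl.Ufilt_mono (by omega) this
    · have := cl.Ufilt_mul (cl.ιU_mem_Ufilt (cl.bracket a b)) (cl.gm_mem_Ufilt t le_rfl)
      exact cl.Ufilt_mono (by omega) this

lemma comm_mono (hε : IsBicharacter ε) (lu lv : List (G × L))
    (hu : ∀ p ∈ lu, p.2 ∈ cl.grading p.1) (hv : ∀ p ∈ lv, p.2 ∈ cl.grading p.1) :
    (lu.map fun p => cl.ιU p.2).prod * (lv.map fun p => cl.ιU p.2).prod -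
      ε ((lu.map Prod.fst).prod) ((lv.map Prod.fst).prod) •
        ((lv.map fun p => cl.ιU p.2).prod * (lu.map fun p => cl.ιU p.2).prod) ∈
      cl.UfiltPred (lu.length + lv.length) := by
  cases lv with
  | nil => simp [bichar_one_right hε]
  | cons q s =>
    induction lu with
    | nil => simp [bichar_one_left hε]
    | cons p t iht =>
      obtain ⟨g1, a⟩ := p
      have ha : a ∈ cl.grading g1 := hu (g1, a) (by simp)
      have ihm := iht (fun r hr => hu r (by simp [hr]))
      set V := ((q :: s).map fun p => cl.ιU p.2).prod with hV
      set gv := ((q :: s).map Prod.fst).prod with hgv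
      set S := (t.map fun p => cl.ιU p.2).prod with hS
      set gs := (t.map Prod.fst).prod with hgs
      simp only [List.map_cons, List.prod_cons, List.length_cons]
      have hr2 := cl.comm_single hε ha (q :: s) hv
      rw [← hV, ← hgv] at hr2
      have expand : cl.ιU a * S * V - ε (g1 * gs) gv • (V * (cl.ιU a * S))
          = ε gs gv • ((cl.ιU a * V - ε g1 gv • (V * cl.ιU a)) * S)
            + cl.ιU a * (S * V - ε gs gv • (V * S)) := by
        rw [hε.2.2]
        simp only [sub_mul, mul_sub, smul_sub, smul_mul_assoc, mul_smul_comm, smul_smul,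
          mul_assoc]
        rw [mul_comm (ε gs gv) (ε g1 gv)]
        abel
      rw [expand]
      refine add_mem ?_ ?_
      · refine Submodule.smul_mem _ _ (cl.Ufilt_le_UfiltPred ?_
          (cl.Ufilt_mul (hr2) (cl.gm_mem_Ufilt t le_rfl)))
        simp [List.length_cons]; omega
      · have h1 : S * V - ε gs gv • (V * S) ∈ cl.Ufilt (t.length + (q :: s).length - 1) :=
          cl.UfiltPred_le_Ufilt (by omega) ihm
        have h2 := cl.Ufilt_mul (cl.ιU_mem_Ufilt a) h1
        refine cl.Ufilt_le_UfiltPred ?_ h2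
        simp [List.length_cons]; omega

lemma comm_span (hε : IsBicharacter ε) {n m : ℕ} {g h : G} {u v : cl.U}
    (hu : u ∈ Submodule.span K (cl.GMon n g)) (hv : v ∈ Submodule.span K (cl.GMon m h)) :
    u * v - ε g h • (v * u) ∈ cl.UfiltPred (n + m) := by
  refine Submodule.span_induction
    (p := fun u _ => u * v - ε g h • (v * u) ∈ cl.UfiltPred (n + m)) ?_ ?_ ?_ ?_ hu
  · rintro x ⟨lu, hlu, hdu, hlenu, rfl⟩
    refine Submodule.span_induction
      (p := fun v _ => (lu.map fun p => cl.ιU p.2).prod * v -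
        ε g h • (v * (lu.map fun p => cl.ιU p.2).prod) ∈ cl.UfiltPred (n + m)) ?_ ?_ ?_ ?_ hv
    · rintro y ⟨lv, hlv, hdv, hlenv, rfl⟩
      have := cl.comm_mono hε lu lv hlu hlv
      rw [hdu, hdv] at this
      exact cl.UfiltPred_mono (by omega) this
    · simp
    · intro y z _ _ hy hz
      have : (lu.map fun p => cl.ιU p.2).prod * (y + z) -
          ε g h • ((y + z) * (lu.map fun p => cl.ιU p.2).prod)
          = ((lu.map fun p => cl.ιU p.2).prod * y -
              ε g h • (y * (lu.map fun p => cl.ιU p.2).prod))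
            + ((lu.map fun p => cl.ιU p.2).prod * z -
              ε g h • (z * (lu.map fun p => cl.ιU p.2).prod)) := by
        rw [mul_add, add_mul, smul_add]; abel
      rw [this]; exact add_mem hy hz
    · intro c y _ hy
      have : (lu.map fun p => cl.ιU p.2).prod * (c • y) -
          ε g h • ((c • y) * (lu.map fun p => cl.ιU p.2).prod)
          = c • ((lu.map fun p => cl.ιU p.2).prod * y -
              ε g h • (y * (lu.map fun p => cl.ιU p.2).prod)) := by
        rw [mul_smul_comm, smul_mul_assoc, smul_sub, smul_comm c (ε g h)]
      rw [this]; exact Submodule.smul_mem _ _ hy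
  · simp
  · intro x y _ _ hx hy
    have : (x + y) * v - ε g h • (v * (x + y))
        = (x * v - ε g h • (v * x)) + (y * v - ε g h • (v * y)) := by
      rw [add_mul, mul_add, smul_add]; abel
    rw [this]; exact add_mem hx hy
  · intro c x _ hx
    have : (c • x) * v - ε g h • (v * (c • x))
        = c • (x * v - ε g h • (v * x)) := by
      rw [smul_mul_assoc, mul_smul_comm, smul_sub, smul_comm c (ε g h)]
    rw [this]; exact Submodule.smul_mem _ _ hx

lemma comm_filt (hε : IsBicharacter ε) {n m : ℕ} {g h : G} {u v : cl.U}
    (hun : u ∈ cl.Ufilt n) (hvm : v ∈ cl.Ufilt m)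
    (hug : u ∈ cl.Udeg g) (hvh : v ∈ cl.Udeg h) :
    u * v - ε g h • (v * u) ∈ cl.UfiltPred (n + m) :=
  cl.comm_span hε (cl.mem_span_GMon hun hug) (cl.mem_span_GMon hvm hvh)

end Aux

end ColorLie

/-- The associated graded algebra `gr(U(g))` of the universal
enveloping algebra of a color Lie algebra `g`, with the bracket
`{û,v̂} := π_{n+m-1}(uv - ε(|u|,|v|) vu)` on homogeneous filtration classes, is a
`(G,ε)`-color Poisson algebra, and on `gr¹(U(g))` the bracket recovers the color
Lie bracket of `g`.  All identities are stated on (G-homogeneous) classes of the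
filtration pieces, via the canonical projections `π_k`. -/
theorem grU_isColorPoisson
    {K : Type*} [Field K] [CharZero K] {G : Type*} [CommGroup G] [DecidableEq G]
    {L : Type*} [AddCommGroup L] [Module K L]
    {ε : G → G → K} (hε : IsBicharacter ε) (cl : ColorLie K G ε L) :
    -- (a) the bracket is defined: commutators drop the filtration degree by one
    (∀ (n m : ℕ) (g h : G) (u v : cl.U), u ∈ cl.Ufilt n → v ∈ cl.Ufilt m →
      u ∈ cl.Udeg g → v ∈ cl.Udeg h →
      u * v - ε g h • (v * u) ∈ cl.Ufilt (n + m - 1)) ∧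
    -- (b) the bracket is well defined: it does not depend on the representatives
    (∀ (n m : ℕ) (g h : G) (u u' v v' : cl.U),
      u ∈ cl.Ufilt n → u' ∈ cl.Ufilt n → v ∈ cl.Ufilt m → v' ∈ cl.Ufilt m →
      u ∈ cl.Udeg g → u' ∈ cl.Udeg g → v ∈ cl.Udeg h → v' ∈ cl.Udeg h →
      u - u' ∈ cl.UfiltPred n → v - v' ∈ cl.UfiltPred m →
      ∀ (hc : u * v - ε g h • (v * u) ∈ cl.Ufilt (n + m - 1))
        (hc' : u' * v' - ε g h • (v' * u') ∈ cl.Ufilt (n + m - 1)),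
        cl.πgr (n + m - 1) ⟨u * v - ε g h • (v * u), hc⟩ =
        cl.πgr (n + m - 1) ⟨u' * v' - ε g h • (v' * u'), hc'⟩) ∧
    -- (c) the multiplication of `gr(U(g))` is `ε`-commutative
    (∀ (n m : ℕ) (g h : G) (u v : cl.U), u ∈ cl.Ufilt n → v ∈ cl.Ufilt m →
      u ∈ cl.Udeg g → v ∈ cl.Udeg h →
      ∀ (h1 : u * v ∈ cl.Ufilt (n + m)) (h2 : v * u ∈ cl.Ufilt (n + m)),
        cl.πgr (n + m) ⟨u * v, h1⟩ = ε g h • cl.πgr (n + m) ⟨v * u, h2⟩) ∧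
    -- (d) `ε`-antisymmetry of the bracket
    (∀ (n m : ℕ) (g h : G) (u v : cl.U), u ∈ cl.Ufilt n → v ∈ cl.Ufilt m →
      u ∈ cl.Udeg g → v ∈ cl.Udeg h →
      ∀ (h1 : u * v - ε g h • (v * u) ∈ cl.Ufilt (n + m - 1))
        (h2 : v * u - ε h g • (u * v) ∈ cl.Ufilt (n + m - 1)),
        cl.πgr (n + m - 1) ⟨u * v - ε g h • (v * u), h1⟩ =
          -(ε g h) • cl.πgr (n + m - 1) ⟨v * u - ε h g • (u * v), h2⟩) ∧
    -- (e) the `ε`-Jacobi identity for the bracket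
    (∀ (n m p : ℕ) (g h k : G) (u v w : cl.U),
      u ∈ cl.Ufilt n → v ∈ cl.Ufilt m → w ∈ cl.Ufilt p →
      u ∈ cl.Udeg g → v ∈ cl.Udeg h → w ∈ cl.Udeg k →
      ∀ (h1 : u * (v * w - ε h k • (w * v)) -
            ε g (h * k) • ((v * w - ε h k • (w * v)) * u) ∈ cl.Ufilt (n + m + p - 2))
        (h2 : v * (w * u - ε k g • (u * w)) -
            ε h (k * g) • ((w * u - ε k g • (u * w)) * v) ∈ cl.Ufilt (n + m + p - 2))
        (h3 : w * (u * v - ε g h • (v * u)) -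
            ε k (g * h) • ((u * v - ε g h • (v * u)) * w) ∈ cl.Ufilt (n + m + p - 2)),
        ε k g • cl.πgr (n + m + p - 2) ⟨_, h1⟩ +
        ε g h • cl.πgr (n + m + p - 2) ⟨_, h2⟩ +
        ε h k • cl.πgr (n + m + p - 2) ⟨_, h3⟩ = 0) ∧
    -- (f) the `ε`-Leibniz rule `{û, v̂ŵ} = {û,v̂}ŵ + ε(|u|,|v|) v̂{û,ŵ}`
    (∀ (n m p : ℕ) (g h k : G) (u v w : cl.U),
      u ∈ cl.Ufilt n → v ∈ cl.Ufilt m → w ∈ cl.Ufilt p →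
      u ∈ cl.Udeg g → v ∈ cl.Udeg h → w ∈ cl.Udeg k →
      ∀ (hL : u * (v * w) - ε g (h * k) • (v * w * u) ∈ cl.Ufilt (n + m + p - 1))
        (hR1 : (u * v - ε g h • (v * u)) * w ∈ cl.Ufilt (n + m + p - 1))
        (hR2 : v * (u * w - ε g k • (w * u)) ∈ cl.Ufilt (n + m + p - 1)),
        cl.πgr (n + m + p - 1) ⟨_, hL⟩ =
          cl.πgr (n + m + p - 1) ⟨_, hR1⟩ +
          ε g h • cl.πgr (n + m + p - 1) ⟨_, hR2⟩) ∧
    -- (g) on `gr¹(U(g))` the bracket recovers the color Lie bracket of `g`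
    (∀ (g h : G) (X Y : L), X ∈ cl.grading g → Y ∈ cl.grading h →
      ∀ (h1 : cl.ιU X * cl.ιU Y - ε g h • (cl.ιU Y * cl.ιU X) ∈ cl.Ufilt 1)
        (h2 : cl.ιU (cl.bracket X Y) ∈ cl.Ufilt 1),
        cl.πgr 1 ⟨_, h1⟩ = cl.πgr 1 ⟨_, h2⟩) := by

  obtain ⟨hanti, hmulR, hmulL⟩ := hε
  have hε' : IsBicharacter ε := ⟨hanti, hmulR, hmulL⟩
  have n1 : ∀ g h : G, ε g h ≠ 0 := fun g h => ColorLie.bichar_ne_zero hε' g h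
  have einv : ∀ g h : G, ε g h = (ε h g)⁻¹ := fun g h =>
    eq_inv_of_mul_eq_one_left (hanti g h)
  refine ⟨?_, ?_, ?_, ?_, ?_, ?_, ?_⟩
  · -- (a)
    intro n m g h u v hun hvm hug hvh
    exact cl.UfiltPred_le_Ufilt (by omega) (cl.comm_filt hε' hun hvm hug hvh)
  · -- (b)
    intro n m g h u u' v v' hu hu' hv hv' hug hug' hvh hvh' hdu hdv hc hc'
    have key : (u * v - ε g h • (v * u)) - (u' * v' - ε g h • (v' * u')) ∈
        cl.UfiltPred (n + m - 1) := by
      have hid : (u * v - ε g h • (v * u)) - (u' * v' - ε g h • (v' * u'))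
          = ((u - u') * v - ε g h • (v * (u - u')))
            + (u' * (v - v') - ε g h • ((v - v') * u')) := by
        simp only [sub_mul, mul_sub, smul_sub]; abel
      rw [hid]
      refine add_mem ?_ ?_
      · cases n with
        | zero =>
          have h0 : u - u' = 0 := by simpa [ColorLie.UfiltPred] using hdu
          simp [h0]
        | succ n =>
          have h1 : u - u' ∈ cl.Ufilt n := hdu
          exact cl.UfiltPred_mono (by omega)
            (cl.comm_filt hε' h1 hv (sub_mem hug hug') hvh)
      · cases m with
        | zero =>
          have h0 : v - v' = 0 := by simpa [ColorLie.UfiltPred] using hdv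
          simp [h0]
        | succ m =>
          have h1 : v - v' ∈ cl.Ufilt m := hdv
          exact cl.UfiltPred_mono (by omega)
            (cl.comm_filt hε' hu' h1 hug' (sub_mem hvh hvh'))
    have key2 : ((⟨u * v - ε g h • (v * u), hc⟩ : cl.Ufilt (n + m - 1)) -
        ⟨u' * v' - ε g h • (v' * u'), hc'⟩) ∈ cl.grSub (n + m - 1) := by
      simpa [ColorLie.grSub, Submodule.mem_comap] using key
    simp only [ColorLie.πgr, Submodule.mkQ_apply]
    exact (Submodule.Quotient.eq _).2 key2
  · -- (c)
    intro n m g h u v hun hvm hug hvh h1 h2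
    have key := cl.comm_filt hε' hun hvm hug hvh
    have key2 : ((⟨u * v, h1⟩ : cl.Ufilt (n + m)) - ε g h • ⟨v * u, h2⟩) ∈
        cl.grSub (n + m) := by
      simpa [ColorLie.grSub, Submodule.mem_comap] using key
    simp only [ColorLie.πgr, Submodule.mkQ_apply, ← Submodule.Quotient.mk_smul]
    exact (Submodule.Quotient.eq _).2 key2
  · -- (d)
    intro n m g h u v hun hvm hug hvh h1 h2
    have key : (⟨u * v - ε g h • (v * u), h1⟩ : cl.Ufilt (n + m - 1)) =
        (-(ε g h)) • ⟨v * u - ε h g • (u * v), h2⟩ := by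
      apply Subtype.ext
      show u * v - ε g h • (v * u) = (-(ε g h)) • (v * u - ε h g • (u * v))
      have hgh := hanti g h
      match_scalars <;> first | ring1 | linear_combination hgh | linear_combination -hgh | linear_combination (2:K)*hgh | linear_combination (-2:K)*hgh
    rw [key, map_smul]
  · -- (e)
    intro n m p g h k u v w hun hvm hwp hug hvh hwk h1 h2 h3
    have key : ε k g • (⟨_, h1⟩ : cl.Ufilt (n + m + p - 2)) + ε g h • ⟨_, h2⟩ +
        ε h k • ⟨_, h3⟩ = 0 := by
      apply Subtype.ext
      show ε k g • (u * (v * w - ε h k • (w * v)) -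
            ε g (h * k) • ((v * w - ε h k • (w * v)) * u)) +
          ε g h • (v * (w * u - ε k g • (u * w)) -
            ε h (k * g) • ((w * u - ε k g • (u * w)) * v)) +
          ε h k • (w * (u * v - ε g h • (v * u)) -
            ε k (g * h) • ((u * v - ε g h • (v * u)) * w)) = (0 : cl.U)
      rw [hmulR g h k, hmulR h k g, hmulR k g h, einv g k, einv h g, einv k h]
      simp only [mul_sub, sub_mul, smul_sub, smul_add, smul_smul, smul_mul_assoc,
        mul_smul_comm, mul_assoc]
      have hkg0 := n1 k g
      have hgh0 := n1 g h
      have hhk0 := n1 h k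
      match_scalars <;> field_simp <;> ring
    rw [← map_smul, ← map_smul, ← map_smul, ← map_add, ← map_add, key, map_zero]
  · -- (f)
    intro n m p g h k u v w hun hvm hwp hug hvh hwk hL hR1 hR2
    have key : (⟨_, hL⟩ : cl.Ufilt (n + m + p - 1)) = ⟨_, hR1⟩ + ε g h • ⟨_, hR2⟩ := by
      apply Subtype.ext
      show u * (v * w) - ε g (h * k) • (v * w * u) =
          (u * v - ε g h • (v * u)) * w + ε g h • (v * (u * w - ε g k • (w * u)))
      rw [hmulR g h k]
      simp only [mul_sub, sub_mul, smul_sub, smul_smul, smul_mul_assoc, mul_smul_comm,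
        mul_assoc]
      abel
    rw [key, map_add, map_smul]
  · -- (g)
    intro g h X Y hX hY h1 h2
    have key : (⟨cl.ιU X * cl.ιU Y - ε g h • (cl.ιU Y * cl.ιU X), h1⟩ : cl.Ufilt 1) =
        ⟨cl.ιU (cl.bracket X Y), h2⟩ :=
      Subtype.ext (cl.ιU_comm hX hY)
    rw [key]
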